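/- Let τ₁, c₁, c₂ > 0 with c₂ ≤ τ₁²/(4c₁), and let (x₁(t), x₂(t)) be a solution of ẋ₁ = -τ₁x₁ + c₁x₂, ẋ₂ = -c₂|x₁| starting in Ω = {(x₁,x₂) : x₂ ≥ (τ₁/(2c₁))|x₁|, x₂ > 0}. Then the solution is bounded, x₂(t) is nonincreasing and converges to a limit x₂' ≥ 0, and x₁(t) → 0 as t → ∞. -/

import Mathlib

open Filter Set Topology

private lemma max_sub_max_le (a b : ℝ) : max a 0 - max b 0 ≤ max (a - b) 0 := by
  have h1 : a - b ≤ max (a - b) 0 := le_max_left _ _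
  have h2 : b ≤ max b 0 := le_max_left _ _
  have h3 : (0:ℝ) ≤ max b 0 := le_max_right _ _
  have h4 : (0:ℝ) ≤ max (a - b) 0 := le_max_right _ _
  have : max a 0 ≤ max (a - b) 0 + max b 0 := max_le (by linarith) (by linarith)
  linarith


private lemma slope_ev {φ : ℝ → ℝ} {d x r : ℝ} (h : HasDerivAt φ d x) (hd : d < r) :
    ∀ᶠ z in 𝓝[>] x, (z - x)⁻¹ * (φ z - φ x) < r := by
  have h1 : Filter.Tendsto (slope φ x) (𝓝[>] x) (nhds d) :=
    (hasDerivAt_iff_tendsto_slope.1 h).mono_left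
      (nhdsWithin_mono x fun z hz => Set.mem_compl_singleton_iff.mpr (Set.mem_Ioi.mp hz).ne')
  filter_upwards [h1.eventually_lt_const hd] with z hz
  rwa [slope_def_field, div_eq_inv_mul] at hz

set_option maxHeartbeats 1000000 in
theorem stmt_4 (τ₁ c₁ c₂ : ℝ) (hτ : 0 < τ₁) (hc₁ : 0 < c₁) (hc₂ : 0 < c₂)
    (hcond : c₂ ≤ τ₁ ^ 2 / (4 * c₁))
    (t₀ : ℝ) (x₁ x₂ : ℝ → ℝ)
    (hode : ∀ t, t₀ ≤ t →
      HasDerivAt x₁ (-τ₁ * x₁ t + c₁ * x₂ t) t ∧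
      HasDerivAt x₂ (-c₂ * |x₁ t|) t)
    (hinit : 0 < x₂ t₀ ∧ τ₁ / (2 * c₁) * |x₁ t₀| ≤ x₂ t₀) :
    (∃ M : ℝ, ∀ t, t₀ ≤ t → |x₁ t| ≤ M ∧ |x₂ t| ≤ M) ∧
    AntitoneOn x₂ (Set.Ici t₀) ∧
    (∃ L : ℝ, 0 ≤ L ∧ Filter.Tendsto x₂ Filter.atTop (nhds L)) ∧
    Filter.Tendsto x₁ Filter.atTop (nhds 0) := by
  obtain ⟨h0, h1⟩ := hinit
  set k : ℝ := τ₁ / (2 * c₁) with hk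
  have hkpos : 0 < k := div_pos hτ (by linarith)
  have hkc : k * c₁ = τ₁ / 2 := by rw [hk]; field_simp
  have hkt : c₂ ≤ k * τ₁ / 2 := by
    have : τ₁ ^ 2 / (4 * c₁) = k * τ₁ / 2 := by rw [hk]; field_simp; ring
    linarith [hcond, this.symm.le]
  clear_value k
  -- continuity
  have hcont₁ : ∀ t, t₀ ≤ t → ContinuousAt x₁ t := fun t ht => (hode t ht).1.continuousAt
  have hcont₂ : ∀ t, t₀ ≤ t → ContinuousAt x₂ t := fun t ht => (hode t ht).2.continuousAt
  -- invariance of Ω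
  have key : ∀ t, t₀ ≤ t → k * |x₁ t| ≤ x₂ t := by
    intro T hT
    have hmain := le_gronwallBound_of_liminf_deriv_right_le
      (f := fun t => max (k * |x₁ t| - x₂ t) 0)
      (f' := fun x => τ₁ / 2 * max (k * |x₁ x| - x₂ x) 0)
      (δ := 0) (K := τ₁ / 2) (ε := 0) (a := t₀) (b := T)
      ?_ ?_ (by simp [h1, max_le_iff, sub_nonpos]) (fun x _ => by simp) T ⟨hT, le_refl T⟩
    · rw [gronwallBound_ε0_δ0] at hmain
      have := le_trans (le_max_left (k * |x₁ T| - x₂ T) 0) hmain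
      linarith
    · -- continuity
      intro z hz
      exact ContinuousAt.continuousWithinAt
        (ContinuousAt.sup (((hcont₁ z hz.1).abs.const_mul k).sub (hcont₂ z hz.1))
          continuousAt_const)
    · -- slope condition
      intro x hx r hr
      have hxt : t₀ ≤ x := hx.1
      obtain ⟨hd₁, hd₂⟩ := hode x hxt
      replace hr : τ₁ / 2 * max (k * |x₁ x| - x₂ x) 0 < r := hr
      have hr0 : 0 < r := lt_of_le_of_lt (by positivity) hr
      rcases lt_or_ge (k * |x₁ x| - x₂ x) 0 with hFneg | hFpos
      · -- interior of Ω: g is locally 0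
        have hcf : ContinuousAt (fun t => k * |x₁ t| - x₂ t) x :=
          ((hcont₁ x hxt).abs.const_mul k).sub (hcont₂ x hxt)
        have hev : ∀ᶠ z in 𝓝[>] x, k * |x₁ z| - x₂ z < 0 :=
          (hcf.eventually_lt_const hFneg).filter_mono nhdsWithin_le_nhds
        refine (hev.mono fun z hz => ?_).frequently
        show (z - x)⁻¹ * (max (k * |x₁ z| - x₂ z) 0 - max (k * |x₁ x| - x₂ x) 0) < r
        rw [max_eq_right hz.le, max_eq_right hFneg.le, sub_zero, mul_zero]
        exact hr0
      · -- boundary / outside: use derivative bounds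
        rw [max_eq_left hFpos] at hr
        rcases lt_trichotomy (x₁ x) 0 with hP | hP | hP
        · -- x₁ x < 0 : track φ z = -k x₁ z - x₂ z
          have hφ : HasDerivAt (fun t => -(k * x₁ t) - x₂ t)
              (-(k * (-τ₁ * x₁ x + c₁ * x₂ x)) - (-c₂ * |x₁ x|)) x :=
            ((hd₁.const_mul k).neg).sub hd₂
          have hder : -(k * (-τ₁ * x₁ x + c₁ * x₂ x)) - (-c₂ * |x₁ x|) < r := by
            rw [abs_of_neg hP] at *
            have hQ : k * (c₁ * x₂ x) = τ₁ / 2 * x₂ x := by rw [← mul_assoc, hkc]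
            nlinarith [mul_nonneg (by nlinarith : (0:ℝ) ≤ 3 * (k * τ₁) / 2 - c₂) (by linarith : (0:ℝ) ≤ -(x₁ x))]
          have ev1 := slope_ev hφ hder
          have ev2 : ∀ᶠ z in 𝓝[>] x, x₁ z < 0 :=
            ((hcont₁ x hxt).eventually_lt_const hP).filter_mono nhdsWithin_le_nhds
          refine ((ev1.and (ev2.and self_mem_nhdsWithin)).mono ?_).frequently
          rintro z ⟨hz1, hz2, hz3⟩
          show (z - x)⁻¹ * (max (k * |x₁ z| - x₂ z) 0 - max (k * |x₁ x| - x₂ x) 0) < r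
          have hzx : (0:ℝ) < (z - x)⁻¹ := by
            rw [inv_pos]; exact sub_pos.mpr hz3
          have e1 : max (k * |x₁ z| - x₂ z) 0 - max (k * |x₁ x| - x₂ x) 0 ≤
              max ((-(k * x₁ z) - x₂ z) - (-(k * x₁ x) - x₂ x)) 0 := by
            have := max_sub_max_le (k * |x₁ z| - x₂ z) (k * |x₁ x| - x₂ x)
            rw [abs_of_neg hz2, abs_of_neg hP] at *
            convert this using 3 <;> ring
          calc (z - x)⁻¹ * (max (k * |x₁ z| - x₂ z) 0 - max (k * |x₁ x| - x₂ x) 0)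
              ≤ (z - x)⁻¹ * max ((-(k * x₁ z) - x₂ z) - (-(k * x₁ x) - x₂ x)) 0 :=
                mul_le_mul_of_nonneg_left e1 hzx.le
            _ = max ((z - x)⁻¹ * ((-(k * x₁ z) - x₂ z) - (-(k * x₁ x) - x₂ x))) 0 := by
                rw [mul_max_of_nonneg _ _ hzx.le, mul_zero]
            _ < r := max_lt hz1 hr0
        · -- x₁ x = 0 : need both tracks
          have hφ₁ : HasDerivAt (fun t => k * x₁ t - x₂ t)
              (k * (-τ₁ * x₁ x + c₁ * x₂ x) - (-c₂ * |x₁ x|)) x :=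
            (hd₁.const_mul k).sub hd₂
          have hφ₂ : HasDerivAt (fun t => -(k * x₁ t) - x₂ t)
              (-(k * (-τ₁ * x₁ x + c₁ * x₂ x)) - (-c₂ * |x₁ x|)) x :=
            ((hd₁.const_mul k).neg).sub hd₂
          have hFx : k * |x₁ x| - x₂ x = -x₂ x := by rw [hP]; simp
          have hder₁ : k * (-τ₁ * x₁ x + c₁ * x₂ x) - (-c₂ * |x₁ x|) < r := by
            rw [hFx] at hFpos hr
            rw [hP]; simp only [mul_zero, neg_zero, abs_zero, zero_add, mul_zero, sub_zero, neg_zero, sub_zero]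
            nlinarith
          have hder₂ : -(k * (-τ₁ * x₁ x + c₁ * x₂ x)) - (-c₂ * |x₁ x|) < r := by
            rw [hFx] at hFpos hr
            rw [hP]; simp only [mul_zero, neg_zero, abs_zero, zero_add, mul_zero, sub_zero, neg_zero, sub_zero]
            nlinarith
          have ev1 := slope_ev hφ₁ hder₁
          have ev2 := slope_ev hφ₂ hder₂
          refine ((ev1.and (ev2.and self_mem_nhdsWithin)).mono ?_).frequently
          rintro z ⟨hz1, hz2, hz3⟩
          show (z - x)⁻¹ * (max (k * |x₁ z| - x₂ z) 0 - max (k * |x₁ x| - x₂ x) 0) < r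
          have hzx : (0:ℝ) < (z - x)⁻¹ := by
            rw [inv_pos]; exact sub_pos.mpr hz3
          have e0 : k * |x₁ z| - x₂ z - (k * |x₁ x| - x₂ x) ≤
              max ((k * x₁ z - x₂ z) - (k * x₁ x - x₂ x))
                  ((-(k * x₁ z) - x₂ z) - (-(k * x₁ x) - x₂ x)) := by
            rw [hP, abs_zero]
            rcases le_total (x₁ z) 0 with hz4 | hz4
            · rw [abs_of_nonpos hz4]
              exact le_trans (le_of_eq (by ring)) (le_max_right _ _)
            · rw [abs_of_nonneg hz4]
              exact le_trans (le_of_eq (by ring)) (le_max_left _ _)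
          have e1 : max (k * |x₁ z| - x₂ z) 0 - max (k * |x₁ x| - x₂ x) 0 ≤
              max (max ((k * x₁ z - x₂ z) - (k * x₁ x - x₂ x))
                  ((-(k * x₁ z) - x₂ z) - (-(k * x₁ x) - x₂ x))) 0 := by
            refine le_trans (max_sub_max_le _ _) (max_le_max ?_ le_rfl)
            exact e0
          calc (z - x)⁻¹ * (max (k * |x₁ z| - x₂ z) 0 - max (k * |x₁ x| - x₂ x) 0)
              ≤ (z - x)⁻¹ * max (max ((k * x₁ z - x₂ z) - (k * x₁ x - x₂ x))
                  ((-(k * x₁ z) - x₂ z) - (-(k * x₁ x) - x₂ x))) 0 :=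
                mul_le_mul_of_nonneg_left e1 hzx.le
            _ = max (max ((z - x)⁻¹ * ((k * x₁ z - x₂ z) - (k * x₁ x - x₂ x)))
                  ((z - x)⁻¹ * ((-(k * x₁ z) - x₂ z) - (-(k * x₁ x) - x₂ x)))) 0 := by
                rw [mul_max_of_nonneg _ _ hzx.le, mul_max_of_nonneg _ _ hzx.le, mul_zero]
            _ < r := max_lt (max_lt hz1 hz2) hr0
        · -- x₁ x > 0
          have hφ : HasDerivAt (fun t => k * x₁ t - x₂ t)
              (k * (-τ₁ * x₁ x + c₁ * x₂ x) - (-c₂ * |x₁ x|)) x :=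
            (hd₁.const_mul k).sub hd₂
          have hder : k * (-τ₁ * x₁ x + c₁ * x₂ x) - (-c₂ * |x₁ x|) < r := by
            rw [abs_of_pos hP] at *
            have hQ : k * (c₁ * x₂ x) = τ₁ / 2 * x₂ x := by rw [← mul_assoc, hkc]
            nlinarith [mul_nonneg (by nlinarith : (0:ℝ) ≤ k * τ₁ / 2 - c₂) hP.le,
              mul_nonneg hτ.le hFpos]
          have ev1 := slope_ev hφ hder
          have ev2 : ∀ᶠ z in 𝓝[>] x, 0 < x₁ z :=
            ((hcont₁ x hxt).eventually_const_lt hP).filter_mono nhdsWithin_le_nhds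
          refine ((ev1.and (ev2.and self_mem_nhdsWithin)).mono ?_).frequently
          rintro z ⟨hz1, hz2, hz3⟩
          show (z - x)⁻¹ * (max (k * |x₁ z| - x₂ z) 0 - max (k * |x₁ x| - x₂ x) 0) < r
          have hzx : (0:ℝ) < (z - x)⁻¹ := by
            rw [inv_pos]; exact sub_pos.mpr hz3
          have e1 : max (k * |x₁ z| - x₂ z) 0 - max (k * |x₁ x| - x₂ x) 0 ≤
              max ((k * x₁ z - x₂ z) - (k * x₁ x - x₂ x)) 0 := by
            have := max_sub_max_le (k * |x₁ z| - x₂ z) (k * |x₁ x| - x₂ x)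
            rw [abs_of_pos hz2, abs_of_pos hP] at *
            exact this
          calc (z - x)⁻¹ * (max (k * |x₁ z| - x₂ z) 0 - max (k * |x₁ x| - x₂ x) 0)
              ≤ (z - x)⁻¹ * max ((k * x₁ z - x₂ z) - (k * x₁ x - x₂ x)) 0 :=
                mul_le_mul_of_nonneg_left e1 hzx.le
            _ = max ((z - x)⁻¹ * ((k * x₁ z - x₂ z) - (k * x₁ x - x₂ x))) 0 := by
                rw [mul_max_of_nonneg _ _ hzx.le, mul_zero]
            _ < r := max_lt hz1 hr0
  have hx₂nonneg : ∀ t, t₀ ≤ t → 0 ≤ x₂ t := fun t ht =>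
    le_trans (by positivity) (key t ht)
  -- antitone
  have anti : AntitoneOn x₂ (Set.Ici t₀) := by
    apply antitoneOn_of_deriv_nonpos (convex_Ici t₀)
    · exact fun t ht => (hcont₂ t ht).continuousWithinAt
    · intro t ht
      rw [interior_Ici] at ht
      exact (hode t (le_of_lt ht)).2.differentiableAt.differentiableWithinAt
    · intro t ht
      rw [interior_Ici] at ht
      rw [((hode t (le_of_lt ht)).2.deriv)]
      have : (0:ℝ) ≤ |x₁ t| := abs_nonneg _
      nlinarith
  -- bounds
  have hx₂le : ∀ t, t₀ ≤ t → x₂ t ≤ x₂ t₀ := fun t ht =>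
    anti (self_mem_Ici) ht ht
  have hbdd : ∃ M : ℝ, ∀ t, t₀ ≤ t → |x₁ t| ≤ M ∧ |x₂ t| ≤ M := by
    refine ⟨x₂ t₀ + x₂ t₀ / k, fun t ht => ⟨?_, ?_⟩⟩
    · have h2 := key t ht
      have h3 := hx₂le t ht
      have h4 : |x₁ t| ≤ x₂ t₀ / k := (le_div_iff₀ hkpos).mpr (by nlinarith)
      have h5 : (0:ℝ) ≤ x₂ t₀ := h0.le
      linarith
    · rw [abs_of_nonneg (hx₂nonneg t ht)]
      have : 0 ≤ x₂ t₀ / k := by positivity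
      linarith [hx₂le t ht]
  -- the limit L
  set L : ℝ := sInf (x₂ '' Set.Ici t₀) with hL
  clear_value L
  have hbdl : BddBelow (x₂ '' Set.Ici t₀) := ⟨0, fun y ⟨t, ht, hyt⟩ => hyt ▸ hx₂nonneg t ht⟩
  have hne : (x₂ '' Set.Ici t₀).Nonempty := ⟨x₂ t₀, t₀, self_mem_Ici, rfl⟩
  have hL0 : 0 ≤ L := by
    rw [hL]; exact le_csInf hne fun y ⟨t, ht, hyt⟩ => hyt ▸ hx₂nonneg t ht
  have hgeL : ∀ t, t₀ ≤ t → L ≤ x₂ t := fun t ht => by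
    rw [hL]; exact csInf_le hbdl ⟨t, ht, rfl⟩
  have htend : Filter.Tendsto x₂ Filter.atTop (nhds L) := by
    rw [Metric.tendsto_atTop]
    intro ε hε
    obtain ⟨y, ⟨T, hT, rfl⟩, hy⟩ := exists_lt_of_csInf_lt hne
      (show sInf (x₂ '' Set.Ici t₀) < L + ε by rw [← hL]; exact lt_add_of_pos_right L hε)
    refine ⟨T, fun t ht => ?_⟩
    have h2 : x₂ t ≤ x₂ T := anti hT (le_trans hT ht) ht
    have h3 : L ≤ x₂ t := hgeL t (le_trans hT ht)
    rw [Real.dist_eq, abs_of_nonneg (by linarith)]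
    linarith
  -- L = 0
  have hLzero : L = 0 := by
    by_contra hne0
    have hLpos : 0 < L := lt_of_le_of_ne hL0 (Ne.symm hne0)
    set β : ℝ := c₁ * L / (2 * τ₁) with hβ
    have hβpos : 0 < β := by positivity
    have h2β : c₁ * L / τ₁ = 2 * β := by rw [hβ]; field_simp
    clear_value β
    -- Gronwall lower estimate for x₁
    have hgron : ∀ t, t₀ ≤ t →
        c₁ * L / τ₁ - x₁ t ≤ (c₁ * L / τ₁ - x₁ t₀) * Real.exp (-τ₁ * (t - t₀)) := by
      intro T hT
      have hmain := le_gronwallBound_of_liminf_deriv_right_le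
        (f := fun t => c₁ * L / τ₁ - x₁ t)
        (f' := fun t => -(-τ₁ * x₁ t + c₁ * x₂ t))
        (δ := c₁ * L / τ₁ - x₁ t₀) (K := -τ₁) (ε := 0) (a := t₀) (b := T)
        (fun z hz => (continuousAt_const.sub (hcont₁ z hz.1)).continuousWithinAt)
        (fun z hz r hr => (slope_ev ((hode z hz.1).1.const_sub (c₁ * L / τ₁)) hr).frequently)
        le_rfl ?_ T ⟨hT, le_rfl⟩
      · rwa [gronwallBound_ε0] at hmain
      · intro z hz
        have h3 := hgeL z hz.1
        have h4 : c₁ * L ≤ c₁ * x₂ z := mul_le_mul_of_nonneg_left h3 hc₁.le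
        have h5 : τ₁ * (c₁ * L / τ₁) = c₁ * L := by field_simp
        rw [add_zero]
        nlinarith
    -- decay of the bound
    have hdecay : Filter.Tendsto (fun t => (c₁ * L / τ₁ - x₁ t₀) * Real.exp (-τ₁ * (t - t₀)))
        Filter.atTop (nhds 0) := by
      rw [show (0:ℝ) = (c₁ * L / τ₁ - x₁ t₀) * 0 by ring]
      apply Filter.Tendsto.const_mul
      apply Real.tendsto_exp_atBot.comp
      have h6 : Filter.Tendsto (fun t : ℝ => t - t₀) Filter.atTop Filter.atTop :=
        tendsto_atTop_add_const_right _ _ tendsto_id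
      exact h6.const_mul_atTop_of_neg (neg_neg_iff_pos.mpr hτ) |>.congr (fun t => rfl)
    obtain ⟨T₁, hT₁⟩ := Filter.eventually_atTop.mp
      ((hdecay.eventually_lt_const hβpos).and (Filter.eventually_ge_atTop t₀))
    set T := max T₁ t₀ with hTdef
    have hTt₀ : t₀ ≤ T := le_max_right _ _
    have hx₁lb : ∀ t, T ≤ t → β ≤ x₁ t := by
      intro t ht
      have h7 := hT₁ t (le_trans (le_max_left _ _) ht)
      have h8 := hgron t h7.2
      linarith [h2β ▸ h8, h7.1]
    -- x₂ decreases at linear rate after T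
    have hanti : AntitoneOn (fun t => x₂ t + c₂ * β * t) (Set.Ici T) := by
      apply antitoneOn_of_deriv_nonpos (convex_Ici T)
      · intro t ht
        exact ((hcont₂ t (le_trans hTt₀ ht)).add ((continuous_const.mul continuous_id).continuousAt)).continuousWithinAt
      · intro t ht
        rw [interior_Ici] at ht
        have hd : HasDerivAt (fun t => x₂ t + c₂ * β * t) (-c₂ * |x₁ t| + c₂ * β * 1) t :=
          (hode t (le_trans hTt₀ ht.le)).2.add
            (by simpa using (hasDerivAt_id t).const_mul (c₂ * β))
        exact hd.differentiableAt.differentiableWithinAt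
      · intro t ht
        rw [interior_Ici] at ht
        have hd : HasDerivAt (fun t => x₂ t + c₂ * β * t) (-c₂ * |x₁ t| + c₂ * β * 1) t :=
          (hode t (le_trans hTt₀ ht.le)).2.add
            (by simpa using (hasDerivAt_id t).const_mul (c₂ * β))
        rw [hd.deriv]
        have h9 : β ≤ x₁ t := hx₁lb t ht.le
        have h10 : β ≤ |x₁ t| := le_trans h9 (le_abs_self _)
        nlinarith
    -- contradiction
    set t₂ : ℝ := T + (x₂ T - L + 1) / (c₂ * β) with ht₂
    have hx₂TL : L ≤ x₂ T := hgeL T hTt₀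
    have ht₂T : T ≤ t₂ := by
      rw [ht₂]
      have : 0 ≤ (x₂ T - L + 1) / (c₂ * β) := div_nonneg (by linarith) (by positivity)
      linarith
    have h11 := hanti (self_mem_Ici) ht₂T ht₂T
    simp only at h11
    have h12 : c₂ * β * t₂ = c₂ * β * T + (x₂ T - L + 1) := by
      rw [ht₂, mul_add, mul_div_cancel₀]
      positivity
    have h13 : L ≤ x₂ t₂ := hgeL t₂ (le_trans hTt₀ ht₂T)
    linarith
  -- x₁ → 0
  have hx₁tend : Filter.Tendsto x₁ Filter.atTop (nhds 0) := by
    have hup : Filter.Tendsto (fun t => x₂ t / k) Filter.atTop (nhds 0) := by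
      have := htend.div_const k
      rwa [hLzero, zero_div] at this
    have hlo : Filter.Tendsto (fun t => -(x₂ t / k)) Filter.atTop (nhds 0) := by
      simpa using hup.neg
    apply tendsto_of_tendsto_of_tendsto_of_le_of_le' hlo hup
    · filter_upwards [eventually_ge_atTop t₀] with t ht
      have := key t ht
      have h2 := abs_nonneg (x₁ t)
      have h3 : -(x₁ t) ≤ |x₁ t| := neg_le_abs _
      rw [neg_le]
      rw [neg_le] at h3
      rw [le_div_iff₀ hkpos]
      nlinarith
    · filter_upwards [eventually_ge_atTop t₀] with t ht
      have := key t ht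
      have h3 : x₁ t ≤ |x₁ t| := le_abs_self _
      rw [le_div_iff₀ hkpos]
      nlinarith
  exact ⟨hbdd, anti, ⟨L, hL0, htend⟩, hx₁tend⟩
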